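/- arXiv:1305.0579 — 5 statements merged into one kernel-verified Lean document; each statement's English description precedes it below -/
import Mathlib

section
/- Let λ, a₀, b₀, x₀ be real numbers with |λ| > 1, b₀ ≠ 0, x₀ ≠ 0, and suppose a₀ + λᵏ b₀ ≠ 0 for every integer k ≥ 0. Define xₙ = (λ^(n(n-1)/2) b₀ⁿ / n!) · x₀ · ∏_{k=0}^{n-1} (1 + a₀/(λᵏ b₀)). Then |xₙ|^{1/n} → ∞ as n → ∞; in particular the power series Σ xₙ tⁿ has zero radius of convergence. -/
open Filter

private lemma abs_log_one_add_le {t : ℝ} (ht : |t| ≤ 1/2) :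
    |Real.log (1 + t)| ≤ 2 * |t| := by
  obtain ⟨h1, h2⟩ := abs_le.mp ht
  have hpos : (0:ℝ) < 1 + t := by linarith
  have hup : Real.log (1 + t) ≤ 1 + t - 1 := Real.log_le_sub_one_of_pos hpos
  have hinv : Real.log (1 + t)⁻¹ ≤ (1 + t)⁻¹ - 1 :=
    Real.log_le_sub_one_of_pos (by positivity)
  rw [Real.log_inv] at hinv
  have hu : (1 + t) * (1 + t)⁻¹ = 1 := mul_inv_cancel₀ hpos.ne'
  have habs := abs_nonneg t
  have h3 := le_abs_self t
  have h4 := neg_abs_le t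
  have hinvle : (1 + t)⁻¹ ≤ 2 := by
    rw [inv_le_comm₀ hpos (by norm_num)]; linarith
  have hinvpos : (0:ℝ) < (1 + t)⁻¹ := by positivity
  refine abs_le.mpr ⟨?_, by linarith⟩
  -- lower bound: -(2|t|) ≤ log (1+t)
  have : 1 - (1 + t)⁻¹ ≤ Real.log (1 + t) := by linarith
  have h5 : 1 - (1 + t)⁻¹ = t * (1 + t)⁻¹ := by
    field_simp
    ring
  nlinarith [mul_le_mul_of_nonneg_right h4 hinvpos.le,
    mul_le_mul_of_nonneg_left hinvle habs]

/-- If `a₀ + λᵏ b₀ ≠ 0` for all `k ≥ 0` and `x₀ ≠ 0`, then the coefficients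
of the formal power series solution of the pantograph equation satisfy
`|xₙ|^(1/n) → ∞`; in particular the series has zero radius of convergence. -/
theorem pantograph_zero_radius
    (lam a₀ b₀ x₀ : ℝ) (hlam : 1 < |lam|) (hb₀ : b₀ ≠ 0) (hx₀ : x₀ ≠ 0)
    (hnz : ∀ k : ℕ, a₀ + lam ^ k * b₀ ≠ 0)
    (x : ℕ → ℝ)
    (hx : ∀ n : ℕ, x n =
      (lam ^ (n * (n - 1) / 2) * b₀ ^ n / (n.factorial : ℝ)) *
        (x₀ * ∏ k ∈ Finset.range n, (1 + a₀ / (lam ^ k * b₀)))) :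
    Tendsto (fun n : ℕ => |x n| ^ ((n : ℝ)⁻¹)) atTop atTop := by
  have hlam0 : lam ≠ 0 := by
    intro h; rw [h, abs_zero] at hlam; linarith
  set ε : ℕ → ℝ := fun k => a₀ / (lam ^ k * b₀) with hεdef
  have hden : ∀ k : ℕ, lam ^ k * b₀ ≠ 0 := fun k => mul_ne_zero (pow_ne_zero _ hlam0) hb₀
  have hfac : ∀ k : ℕ, 1 + ε k ≠ 0 := by
    intro k
    have : 1 + ε k = (a₀ + lam ^ k * b₀) / (lam ^ k * b₀) := by
      show 1 + a₀ / (lam ^ k * b₀) = _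
      rw [eq_div_iff (hden k), add_mul, one_mul, div_mul_cancel₀ _ (hden k)]; ring
    rw [this]
    exact div_ne_zero (hnz k) (hden k)
  have hxne : ∀ n : ℕ, x n ≠ 0 := by
    intro n
    rw [hx n]
    exact mul_ne_zero
      (div_ne_zero (mul_ne_zero (pow_ne_zero _ hlam0) (pow_ne_zero _ hb₀))
        (Nat.cast_ne_zero.mpr n.factorial_ne_zero))
      (mul_ne_zero hx₀ (Finset.prod_ne_zero_iff.mpr fun k _ => hfac k))
  have hxpos : ∀ n : ℕ, 0 < |x n| := fun n => abs_pos.mpr (hxne n)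
  -- summability of the logs
  have hεabs : ∀ k : ℕ, |ε k| = (|a₀| / |b₀|) * (|lam|⁻¹) ^ k := by
    intro k
    simp only [hεdef]
    rw [abs_div, abs_mul, abs_pow, inv_pow]
    ring
  have hsumε : Summable (fun k => |ε k|) := by
    have hgeo : Summable (fun k : ℕ => (|lam|⁻¹) ^ k) :=
      summable_geometric_of_lt_one (by positivity) (inv_lt_one_of_one_lt₀ hlam)
    simpa [hεabs] using hgeo.mul_left (|a₀| / |b₀|)
  have hε0 : Tendsto (fun k => |ε k|) atTop (nhds 0) := hsumε.tendsto_atTop_zero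
  have hev : ∀ᶠ k in atTop, |ε k| ≤ 1/2 := by
    have : Set.Iic (1/2 : ℝ) ∈ nhds (0:ℝ) := Iic_mem_nhds (by norm_num)
    exact hε0.eventually_mem this
  have hg : Summable (fun k => Real.log (1 + ε k)) := by
    refine Summable.of_norm_bounded_eventually_nat (g := fun k => 2 * |ε k|)
      (hsumε.mul_left 2) ?_
    filter_upwards [hev] with k hk
    simpa [Real.norm_eq_abs] using abs_log_one_add_le hk
  obtain ⟨C, hC⟩ : ∃ C : ℝ, ∀ n : ℕ,
      C ≤ ∑ k ∈ Finset.range n, Real.log (1 + ε k) := by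
    have := hg.hasSum.tendsto_sum_nat
    obtain ⟨C, hC⟩ := this.bddBelow_range
    exact ⟨C, fun n => hC ⟨n, rfl⟩⟩
  -- log expansion
  have hlog : ∀ n : ℕ, Real.log |x n|
      = ((n * (n - 1) / 2 : ℕ) : ℝ) * Real.log |lam| + (n : ℝ) * Real.log |b₀|
        - Real.log (n.factorial : ℝ) + Real.log |x₀|
        + ∑ k ∈ Finset.range n, Real.log (1 + ε k) := by
    intro n
    rw [Real.log_abs, hx n]
    rw [Real.log_mul
        (div_ne_zero (mul_ne_zero (pow_ne_zero _ hlam0) (pow_ne_zero _ hb₀))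
          (Nat.cast_ne_zero.mpr n.factorial_ne_zero))
        (mul_ne_zero hx₀ (Finset.prod_ne_zero_iff.mpr fun k _ => hfac k)),
      Real.log_div (mul_ne_zero (pow_ne_zero _ hlam0) (pow_ne_zero _ hb₀))
        (Nat.cast_ne_zero.mpr n.factorial_ne_zero),
      Real.log_mul (pow_ne_zero _ hlam0) (pow_ne_zero _ hb₀),
      Real.log_mul hx₀ (Finset.prod_ne_zero_iff.mpr fun k _ => hfac k),
      Real.log_prod (fun k _ => hfac k),
      Real.log_pow, Real.log_pow, ← Real.log_abs lam, ← Real.log_abs b₀,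
      ← Real.log_abs x₀]
    ring
  set L := Real.log |lam| with hLdef
  have hL : 0 < L := Real.log_pos hlam
  -- main tendsto of (n⁻¹ * log |x n|)
  have hmain : Tendsto (fun n : ℕ => ((n : ℝ))⁻¹ * Real.log |x n|) atTop atTop := by
    -- comparison function
    have hφ : Tendsto (fun n : ℕ => ((n : ℝ) - 1) / 2 * L + Real.log |b₀|
        - Real.log (n : ℝ) + (Real.log |x₀| + C) * ((n : ℝ))⁻¹) atTop atTop := by
      have hlogsmall : ∀ᶠ n : ℕ in atTop, Real.log (n : ℝ) ≤ L / 4 * (n : ℝ) := by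
        have h1 := (Real.isLittleO_log_id_atTop).def (by positivity : (0:ℝ) < L / 4)
        have h2 := tendsto_natCast_atTop_atTop (R := ℝ) |>.eventually h1
        filter_upwards [h2, eventually_ge_atTop 1] with n hn hn1
        have : |Real.log (n : ℝ)| ≤ L / 4 * |(n : ℝ)| := by
          simpa [Real.norm_eq_abs] using hn
        have hnn : (0:ℝ) ≤ (n : ℝ) := Nat.cast_nonneg n
        calc Real.log (n : ℝ) ≤ |Real.log (n : ℝ)| := le_abs_self _
          _ ≤ L / 4 * (n : ℝ) := by rwa [abs_of_nonneg hnn] at this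
      have ht1 : Tendsto (fun n : ℕ => ((n : ℝ) - 1) / 2 * L - Real.log (n : ℝ))
          atTop atTop := by
        have hbase : Tendsto (fun n : ℕ => L / 4 * (n : ℝ) + (-(L / 2))) atTop atTop :=
          tendsto_atTop_add_const_right _ _
            (Tendsto.const_mul_atTop (by positivity) tendsto_natCast_atTop_atTop)
        refine tendsto_atTop_mono' atTop ?_ hbase
        filter_upwards [hlogsmall] with n hn
        nlinarith [hn]
      have ht2 : Tendsto (fun n : ℕ => Real.log |b₀| + (Real.log |x₀| + C) * ((n : ℝ))⁻¹)
          atTop (nhds (Real.log |b₀| + (Real.log |x₀| + C) * 0)) := by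
        exact tendsto_const_nhds.add (tendsto_const_nhds.mul tendsto_inv_atTop_nhds_zero_nat)
      have := ht1.atTop_add ht2
      refine this.congr fun n => ?_
      ring
    refine tendsto_atTop_mono' atTop ?_ hφ
    filter_upwards [eventually_ge_atTop 1] with n hn
    have hn0 : (0:ℝ) < (n : ℝ) := by exact_mod_cast Nat.pos_of_ne_zero (by omega)
    have hcast : ((n * (n - 1) / 2 : ℕ) : ℝ) = (n : ℝ) * ((n : ℝ) - 1) / 2 := by
      obtain ⟨m, rfl⟩ : ∃ m, n = m + 1 := ⟨n - 1, by omega⟩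
      have hdvd : 2 ∣ (m + 1) * ((m + 1) - 1) := by
        rcases Nat.even_mul_succ_self m with ⟨c, hc⟩
        exact ⟨c, by simpa [Nat.mul_comm] using by omega⟩
      rw [Nat.cast_div hdvd (by norm_num)]
      push_cast [Nat.succ_sub_one]
      ring
    have hfact : Real.log (n.factorial : ℝ) ≤ (n : ℝ) * Real.log (n : ℝ) := by
      have h1 : (n.factorial : ℝ) ≤ ((n : ℝ)) ^ n := by
        exact_mod_cast Nat.factorial_le_pow n
      calc Real.log (n.factorial : ℝ) ≤ Real.log ((n : ℝ) ^ n) :=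
            Real.log_le_log (by exact_mod_cast n.factorial_pos) h1
        _ = (n : ℝ) * Real.log (n : ℝ) := Real.log_pow n _
    have hsum := hC n
    have hlogn := hlog n
    rw [hcast] at hlogn
    have key : (n : ℝ) * ((n : ℝ) - 1) / 2 * L + (n : ℝ) * Real.log |b₀|
        - (n : ℝ) * Real.log (n : ℝ) + (Real.log |x₀| + C) ≤ Real.log |x n| := by
      rw [hlogn]; nlinarith [hfact, hsum]
    have : ((n : ℝ))⁻¹ * ((n : ℝ) * ((n : ℝ) - 1) / 2 * L + (n : ℝ) * Real.log |b₀|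
        - (n : ℝ) * Real.log (n : ℝ) + (Real.log |x₀| + C))
        ≤ ((n : ℝ))⁻¹ * Real.log |x n| :=
      mul_le_mul_of_nonneg_left key (by positivity)
    have heq : ((n : ℝ))⁻¹ * ((n : ℝ) * ((n : ℝ) - 1) / 2 * L + (n : ℝ) * Real.log |b₀|
        - (n : ℝ) * Real.log (n : ℝ) + (Real.log |x₀| + C))
        = ((n : ℝ) - 1) / 2 * L + Real.log |b₀| - Real.log (n : ℝ)
          + (Real.log |x₀| + C) * ((n : ℝ))⁻¹ := by
      field_simp
    rw [heq] at this
    linarith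
  -- conclude via exp
  have heq : ∀ n : ℕ, |x n| ^ ((n : ℝ)⁻¹) = Real.exp (((n : ℝ))⁻¹ * Real.log |x n|) := by
    intro n
    rw [Real.rpow_def_of_pos (hxpos n), mul_comm]
  simpa only [heq, Function.comp_def] using Real.tendsto_exp_atTop.comp hmain
end

section
/- Let λ be a real number with |λ| > 1, let β₀ ≠ 0, C > 0, μ > 0, and define θₖ = k!/(λ^{k(k+1)/2} β₀ᵏ). Fix δ with |λ|⁻¹ < δ < 1. Then there exists a constant K₂ ≥ 1, independent of n and k, such that |θₙ μⁿ / (θₖ μᵏ)| ≤ K₂ δⁿ / 2^{n-k} for all integers 0 ≤ k ≤ n-1. -/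
open Filter Finset Topology

-- triangle number step
lemma tri_succ (n : ℕ) : (n+1) * ((n+1) + 1) / 2 = n * (n+1) / 2 + (n+1) := by
  obtain ⟨m, hm⟩ := Nat.even_mul_succ_self n
  have hm' : n * (n+1) = 2 * m := by omega
  have h1 : (n+1) * ((n+1)+1) = 2 * (m + (n+1)) := by
    rw [show (n+1)*((n+1)+1) = n*(n+1) + 2*(n+1) from by ring, hm']; ring
  rw [h1, hm', Nat.mul_div_cancel_left _ (by norm_num : 0 < 2),
    Nat.mul_div_cancel_left _ (by norm_num : 0 < 2)]

/-- With `θₖ = k!/(λ^{k(k+1)/2} β₀ᵏ)`, `|λ| > 1`, `β₀ ≠ 0`, `μ > 0`, and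
`|λ|⁻¹ < δ < 1`, there is `K₂ ≥ 1` with
`|θₙ μⁿ/(θₖ μᵏ)| ≤ K₂ δⁿ / 2^{n-k}` for all `0 ≤ k ≤ n-1`. -/
theorem theta_ratio_bound
    (lam β₀ C μ δ : ℝ) (hlam : 1 < |lam|) (hβ₀ : β₀ ≠ 0) (hC : 0 < C) (hμ : 0 < μ)
    (hδ₁ : |lam|⁻¹ < δ) (hδ₂ : δ < 1)
    (θ : ℕ → ℝ)
    (hθ : ∀ k : ℕ, θ k = (k.factorial : ℝ) / (lam ^ (k * (k + 1) / 2) * β₀ ^ k)) :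
    ∃ K₂ : ℝ, 1 ≤ K₂ ∧ ∀ n k : ℕ, k < n →
      |θ n * μ ^ n / (θ k * μ ^ k)| ≤ K₂ * δ ^ n / 2 ^ (n - k) := by
  have habs : (0:ℝ) < |lam| := by linarith
  have hlam0 : lam ≠ 0 := by simpa [abs_pos] using habs
  have hδ0 : (0:ℝ) < δ := lt_trans (by positivity) hδ₁
  have hβ : (0:ℝ) < |β₀| := abs_pos.mpr hβ₀
  have hld : 1 < |lam| * δ := by have := (inv_lt_iff_one_lt_mul₀ habs).mp hδ₁; linarith [this]
  have hld0 : (0:ℝ) < |lam| * δ := by linarith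
  -- f n = step ratio / δ^n
  set f : ℕ → ℝ := fun n => μ * n / (|β₀| * (|lam| * δ) ^ n) with hf
  have hf0 : ∀ n, 0 ≤ f n := by
    intro n; have : (0:ℕ) ≤ n := Nat.zero_le n
    simp only [hf]; positivity
  have htend : Tendsto f atTop (𝓝 0) := by
    have h1 := tendsto_pow_const_div_const_pow_of_one_lt 1 hld
    have h2 := h1.const_mul (μ / |β₀|)
    simp only [mul_zero] at h2
    refine h2.congr fun n => ?_
    simp only [hf, pow_one]
    field_simp
  obtain ⟨q0, hq0⟩ := eventually_atTop.mp
    (htend.eventually (gt_mem_nhds (by norm_num : (0:ℝ) < 1/2)))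
  set q := max q0 1 with hq
  have hq1 : 1 ≤ q := le_max_right _ _
  have hqle : ∀ n, q ≤ n → f n ≤ 1/2 := fun n hn =>
    (hq0 n (le_trans (le_max_left _ _) hn)).le
  set M : ℝ := 1 + ∑ j ∈ Finset.range q, f j with hMdef
  have hM1 : 1 ≤ M := by
    have : 0 ≤ ∑ j ∈ Finset.range q, f j := Finset.sum_nonneg fun j _ => hf0 j
    simp [hMdef]; linarith
  have hM0 : 0 < M := by linarith
  have hMb : ∀ n, f n ≤ M := by
    intro n
    rcases lt_or_ge n q with h | h
    · have := Finset.single_le_sum (f := f) (fun j _ => hf0 j) (Finset.mem_range.mpr h)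
      simp [hMdef]; linarith
    · have := hqle n h; linarith
  -- g and step identity
  set g : ℕ → ℝ := fun n => θ n * μ ^ n with hg
  have hθne : ∀ n, θ n ≠ 0 := by
    intro n; rw [hθ]
    have h1 : (n.factorial : ℝ) ≠ 0 := Nat.cast_ne_zero.mpr n.factorial_ne_zero
    positivity
  have hgne : ∀ n, g n ≠ 0 := by
    intro n; simp only [hg]
    exact mul_ne_zero (hθne n) (pow_ne_zero n (ne_of_gt hμ))
  have hstep : ∀ n : ℕ, |g (n+1) / g n| = f (n+1) * δ ^ (n+1) := by
    intro n
    have hgg : g (n+1) / g n = ((n:ℝ)+1) * μ / (lam ^ (n+1) * β₀) := by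
      simp only [hg, hθ, tri_succ n, pow_add, pow_succ, Nat.factorial_succ,
        Nat.cast_mul, Nat.cast_add, Nat.cast_one]
      have h1 : (n.factorial : ℝ) ≠ 0 := Nat.cast_ne_zero.mpr n.factorial_ne_zero
      have h2 : lam ^ (n * (n+1) / 2) ≠ 0 := pow_ne_zero _ hlam0
      have h3 : β₀ ^ n ≠ 0 := pow_ne_zero _ hβ₀
      field_simp
    rw [hgg, abs_div, abs_mul, abs_mul, abs_pow]
    have : f (n+1) * δ ^ (n+1) = μ * ((n:ℝ)+1) / (|β₀| * |lam| ^ (n+1)) := by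
      simp only [hf, Nat.cast_add, Nat.cast_one, mul_pow]
      have : δ ^ (n+1) ≠ 0 := pow_ne_zero _ (ne_of_gt hδ0)
      field_simp
    rw [this]
    rw [abs_of_nonneg (by positivity : (0:ℝ) ≤ (n:ℝ)+1), abs_of_pos hμ]
    ring
  -- chain rule for ratios
  have hchain : ∀ n k : ℕ, g (n+1) / g k = (g (n+1) / g n) * (g n / g k) := by
    intro n k
    rw [div_mul_div_comm, mul_comm (g (n+1)) (g n), mul_div_mul_left _ _ (hgne n)]
  have hP1 : (1:ℝ) ≤ 2 * M := by linarith
  have hP0 : (0:ℝ) < 2 * M := by linarith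
  have hδle1 : δ ≤ 1 := le_of_lt hδ₂
  -- main induction
  have main : ∀ k n : ℕ, k < n →
      |g n / g k| ≤ (2*M) ^ (min n q) * δ ^ n / 2 ^ (n - k) := by
    intro k n hkn
    induction n, hkn using Nat.le_induction with
    | base =>
      rw [show k + 1 - k = 1 from by omega, hstep k]
      have h1 : f (k+1) ≤ M := hMb (k+1)
      have h2 : (2*M) ^ 1 ≤ (2*M) ^ (min (k+1) q) :=
        pow_le_pow_right₀ hP1 (le_min (by omega) hq1)
      have hd : (0:ℝ) < δ ^ (k+1) := by positivity
      calc f (k+1) * δ ^ (k+1) ≤ M * δ ^ (k+1) := by gcongr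
        _ = (2*M) ^ 1 * δ ^ (k+1) / 2 ^ 1 := by ring
        _ ≤ (2*M) ^ (min (k+1) q) * δ ^ (k+1) / 2 ^ 1 := by gcongr
    | succ n hn ih =>
      have hsub : n + 1 - k = (n - k) + 1 := by omega
      have habs' : |g (n+1) / g k| = (f (n+1) * δ ^ (n+1)) * |g n / g k| := by
        rw [hchain n k, abs_mul, hstep n]
      have hgnk : 0 ≤ |g n / g k| := abs_nonneg _
      have hdn : δ ^ n ≤ 1 := pow_le_one₀ (le_of_lt hδ0) hδle1
      have hdpos : (0:ℝ) < δ ^ (n+1) := by positivity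
      rcases le_or_gt q (n+1) with hcase | hcase
      · -- tail case : f (n+1) ≤ 1/2
        have hf2 : f (n+1) ≤ 1/2 := hqle (n+1) hcase
        have hmono : (2*M) ^ (min n q) ≤ (2*M) ^ (min (n+1) q) :=
          pow_le_pow_right₀ hP1 (by omega)
        calc |g (n+1) / g k|
            = (f (n+1) * δ ^ (n+1)) * |g n / g k| := habs'
          _ ≤ (1/2 * δ ^ (n+1)) * ((2*M) ^ (min n q) * δ ^ n / 2 ^ (n-k)) := by
              gcongr
          _ = ((2*M) ^ (min n q) * δ ^ n) * δ ^ (n+1) / 2 ^ (n-k+1) := by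
              rw [pow_succ]; ring
          _ ≤ ((2*M) ^ (min (n+1) q) * 1) * δ ^ (n+1) / 2 ^ (n-k+1) := by
              gcongr
          _ = (2*M) ^ (min (n+1) q) * δ ^ (n+1) / 2 ^ (n+1-k) := by
              rw [hsub]; ring
      · -- head case : n+1 < q
        have hmin1 : min (n+1) q = n+1 := min_eq_left (by omega)
        have hmin0 : min n q = n := min_eq_left (by omega)
        have hfM : f (n+1) ≤ M := hMb (n+1)
        calc |g (n+1) / g k|
            = (f (n+1) * δ ^ (n+1)) * |g n / g k| := habs'
          _ ≤ (M * δ ^ (n+1)) * ((2*M) ^ (min n q) * δ ^ n / 2 ^ (n-k)) := by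
              gcongr
          _ = (M * (2*M) ^ n * δ ^ n) * δ ^ (n+1) / 2 ^ (n-k) := by
              rw [hmin0]; ring
          _ ≤ (M * (2*M) ^ n * 1) * δ ^ (n+1) / 2 ^ (n-k) := by
              gcongr
          _ = (2*M) ^ (n+1) * δ ^ (n+1) / 2 ^ (n-k+1) := by
              rw [pow_succ, pow_succ]; ring
          _ = (2*M) ^ (min (n+1) q) * δ ^ (n+1) / 2 ^ (n+1-k) := by
              rw [hmin1, hsub]
  refine ⟨(2*M) ^ q, one_le_pow₀ hP1, fun n k hkn => ?_⟩
  have h1 := main k n hkn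
  have h2 : (2*M) ^ (min n q) ≤ (2*M) ^ q := pow_le_pow_right₀ hP1 (min_le_right _ _)
  have hd : (0:ℝ) < δ ^ n := by positivity
  calc |θ n * μ ^ n / (θ k * μ ^ k)| = |g n / g k| := rfl
    _ ≤ (2*M) ^ (min n q) * δ ^ n / 2 ^ (n-k) := h1
    _ ≤ (2*M) ^ q * δ ^ n / 2 ^ (n-k) := by gcongr
end

section
/- Let r, ρ : ℝ → ℝ be continuous, strictly positive, 2π-periodic functions, and let X be the Banach space of continuous 2π-periodic real functions with the supremum norm. Define L : X → X by (Lx)(t) = ∫_{t-r(t)}^{t} ρ(s)x(s) ds. Then L is a compact linear operator, and its spectral radius satisfies min_{t∈ℝ} ∫_{t-r(t)}^t ρ(s)ds ≤ rad(L) ≤ max_{t∈ℝ} ∫_{t-r(t)}^t ρ(s)ds; in particular rad(L) > 0. -/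
set_option linter.unusedSectionVars false
set_option maxHeartbeats 1000000
set_option synthInstance.maxHeartbeats 1000000

open Real intervalIntegral

namespace DelayAux

variable {α : Type*} [TopologicalSpace α] [CompactSpace α]

/-- A positivity predicate for operators on `C(α, ℝ)`. -/
def PosOp (T : C(α, ℝ) →L[ℝ] C(α, ℝ)) : Prop :=
  ∀ x : C(α, ℝ), (∀ p, 0 ≤ x p) → ∀ p, 0 ≤ T x p

lemma isClosed_posOp : IsClosed {T : C(α, ℝ) →L[ℝ] C(α, ℝ) | PosOp T} := by
  have h : {T : C(α, ℝ) →L[ℝ] C(α, ℝ) | PosOp T} =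
      ⋂ (x : C(α, ℝ)) (_ : ∀ p, 0 ≤ x p) (p : α), {T : C(α, ℝ) →L[ℝ] C(α, ℝ) | 0 ≤ T x p} := by
    ext T
    simp only [Set.mem_iInter, Set.mem_setOf_eq]
    rfl
  rw [h]
  refine isClosed_iInter fun x => isClosed_iInter fun hx => isClosed_iInter fun p => ?_
  have hc : Continuous fun T : C(α, ℝ) →L[ℝ] C(α, ℝ) => T x p :=
    (continuous_eval_const p).comp
      (ContinuousLinearMap.apply ℝ C(α, ℝ) x).continuous
  exact isClosed_le continuous_const hc

lemma PosOp.mul {S T : C(α, ℝ) →L[ℝ] C(α, ℝ)} (hS : PosOp S) (hT : PosOp T) :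
    PosOp (S * T) := by
  intro x hx p
  rw [ContinuousLinearMap.mul_apply]
  exact hS _ (hT x hx) p

lemma PosOp.one : PosOp (1 : C(α, ℝ) →L[ℝ] C(α, ℝ)) := by
  intro x hx p; rw [ContinuousLinearMap.one_apply]; exact hx p

lemma PosOp.add {S T : C(α, ℝ) →L[ℝ] C(α, ℝ)} (hS : PosOp S) (hT : PosOp T) :
    PosOp (S + T) := by
  intro x hx p
  rw [ContinuousLinearMap.add_apply, ContinuousMap.add_apply]
  exact add_nonneg (hS x hx p) (hT x hx p)

lemma PosOp.smul {T : C(α, ℝ) →L[ℝ] C(α, ℝ)} (hT : PosOp T) {c : ℝ} (hc : 0 ≤ c) :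
    PosOp (c • T) := by
  intro x hx p
  rw [ContinuousLinearMap.smul_apply, ContinuousMap.smul_apply, smul_eq_mul]
  exact mul_nonneg hc (hT x hx p)

lemma PosOp.pow {T : C(α, ℝ) →L[ℝ] C(α, ℝ)} (hT : PosOp T) (n : ℕ) : PosOp (T ^ n) := by
  induction n with
  | zero => simpa using PosOp.one
  | succ n ih => rw [pow_succ]; exact ih.mul hT

lemma PosOp.sum_range {T : ℕ → C(α, ℝ) →L[ℝ] C(α, ℝ)} (hT : ∀ n, PosOp (T n)) (n : ℕ) :
    PosOp (∑ i ∈ Finset.range n, T i) := by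
  induction n with
  | zero => simp only [Finset.range_zero, Finset.sum_empty]
            intro x hx p
            simp only [ContinuousLinearMap.zero_apply, ContinuousMap.zero_apply]
            exact le_refl 0
  | succ n ih => rw [Finset.sum_range_succ]; exact ih.add (hT n)

lemma ring_inverse_eq {A : Type*} [Ring A] {a b : A} (h1 : a * b = 1) (h2 : b * a = 1) :
    Ring.inverse a = b := by
  have : a = ((⟨a, b, h1, h2⟩ : Aˣ) : A) := rfl
  rw [this, Ring.inverse_unit]
  rfl

lemma posOp_inverse_one_sub {T : C(α, ℝ) →L[ℝ] C(α, ℝ)} (hT : PosOp T) (h : ‖T‖ < 1) :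
    PosOp (Ring.inverse (1 - T)) := by
  have hsum : Summable fun n : ℕ => T ^ n := summable_geometric_of_norm_lt_one (K := C(α, ℝ) →L[ℝ] C(α, ℝ)) h
  have heq : Ring.inverse (1 - T) = ∑' n : ℕ, T ^ n :=
    ring_inverse_eq (mul_neg_geom_series T h) (geom_series_mul_neg T h)
  rw [heq]
  exact isClosed_posOp.mem_of_tendsto hsum.hasSum.tendsto_sum_nat
    (Filter.Eventually.of_forall fun n => PosOp.sum_range (fun i => hT.pow i) n)


section SpectrumLemma

variable {α : Type*} [TopologicalSpace α] [CompactSpace α] [Nonempty α]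

lemma algebraMap_apply_pt (c : ℝ) (x : C(α, ℝ)) (p : α) :
    ((algebraMap ℝ (C(α, ℝ) →L[ℝ] C(α, ℝ)) c) x) p = c * x p := by
  rw [Algebra.algebraMap_eq_smul_one, ContinuousLinearMap.smul_apply,
    ContinuousLinearMap.one_apply, ContinuousMap.smul_apply, smul_eq_mul]

lemma posOp_algebraMap {c : ℝ} (hc : 0 ≤ c) :
    PosOp (algebraMap ℝ (C(α, ℝ) →L[ℝ] C(α, ℝ)) c) := by
  intro x hx p
  rw [algebraMap_apply_pt]
  exact mul_nonneg hc (hx p)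

lemma smul_eq_algebraMap_mul (c : ℝ) (T : C(α, ℝ) →L[ℝ] C(α, ℝ)) :
    c • T = algebraMap ℝ (C(α, ℝ) →L[ℝ] C(α, ℝ)) c * T := by
  refine ContinuousLinearMap.ext fun x => ContinuousMap.ext fun p => ?_
  rw [ContinuousLinearMap.mul_apply, algebraMap_apply_pt, ContinuousLinearMap.smul_apply,
    ContinuousMap.smul_apply, smul_eq_mul]

lemma exists_mem_spectrum_of_posOp (L : C(α, ℝ) →L[ℝ] C(α, ℝ))
    (hposL : PosOp L) {K : ℝ} (hK : 0 < K) (hL1 : ∀ p, K ≤ L 1 p) :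
    ∃ k ∈ spectrum ℝ L, K ≤ k := by
  by_contra hcon
  push_neg at hcon
  set σA : ℝ →+* (C(α, ℝ) →L[ℝ] C(α, ℝ)) :=
    (algebraMap ℝ (C(α, ℝ) →L[ℝ] C(α, ℝ))) with hσA
  have hU : ∀ lam : ℝ, K ≤ lam → IsUnit (σA lam - L) := by
    intro lam hlam
    by_contra h
    exact absurd hlam (not_le.mpr (hcon lam (spectrum.mem_iff.mpr h)))
  set g : ℝ → C(α, ℝ) →L[ℝ] C(α, ℝ) := fun lam => σA lam - L with hg
  set R : ℝ → C(α, ℝ) →L[ℝ] C(α, ℝ) := fun lam => Ring.inverse (g lam) with hRdef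
  have hR1 : ∀ lam : ℝ, K ≤ lam → g lam * R lam = 1 :=
    fun lam h => Ring.mul_inverse_cancel _ (hU lam h)
  have hR2 : ∀ lam : ℝ, K ≤ lam → R lam * g lam = 1 :=
    fun lam h => Ring.inverse_mul_cancel _ (hU lam h)
  -- Step A : positivity of the resolvent for large λ
  have hA : ∀ lam : ℝ, ‖L‖ < lam → PosOp (R lam) := by
    intro lam hlam
    have hlam0 : (0:ℝ) < lam := lt_of_le_of_lt (norm_nonneg L) hlam
    set T : C(α, ℝ) →L[ℝ] C(α, ℝ) := lam⁻¹ • L with hT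
    have hTalt : T = σA lam⁻¹ * L := by rw [hT, smul_eq_algebraMap_mul]
    have hTnorm : ‖T‖ < 1 := by
      have h1 : ‖T‖ ≤ ‖lam⁻¹‖ * ‖L‖ := by
        rw [hT]; exact ContinuousLinearMap.opNorm_smul_le _ _
      rw [Real.norm_eq_abs, abs_of_pos (inv_pos.mpr hlam0), inv_mul_eq_div] at h1
      exact lt_of_le_of_lt h1 ((div_lt_one hlam0).mpr hlam)
    have hTpos : PosOp T := by rw [hT]; exact hposL.smul (le_of_lt (inv_pos.mpr hlam0))
    have hunit : IsUnit ((1:C(α, ℝ) →L[ℝ] C(α, ℝ)) - T) :=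
      ⟨⟨1 - T, ∑' n : ℕ, T ^ n, mul_neg_geom_series T hTnorm, geom_series_mul_neg T hTnorm⟩, rfl⟩
    have key : g lam = σA lam * (1 - T) := by
      rw [hTalt, mul_sub, mul_one, ← mul_assoc, ← map_mul, mul_inv_cancel₀ hlam0.ne',
        map_one, one_mul]
    have hinv : R lam = Ring.inverse (1 - T) * σA lam⁻¹ := by
      apply ring_inverse_eq
      · rw [key, mul_assoc, ← mul_assoc (1 - T), Ring.mul_inverse_cancel _ hunit, one_mul,
          ← map_mul, mul_inv_cancel₀ hlam0.ne', map_one]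
      · rw [key, mul_assoc, ← mul_assoc (σA lam⁻¹), ← map_mul, inv_mul_cancel₀ hlam0.ne',
          map_one, one_mul, Ring.inverse_mul_cancel _ hunit]
    rw [hinv]
    exact (posOp_inverse_one_sub hTpos hTnorm).mul
      (posOp_algebraMap (le_of_lt (inv_pos.mpr hlam0)))
  set μ₀ : ℝ := ‖L‖ + K with hμ₀
  have hμ₀K : K ≤ μ₀ := le_add_of_nonneg_left (norm_nonneg L)
  have hμ₀L : ‖L‖ < μ₀ := lt_add_of_pos_right _ hK
  have hμ₀pos : (0:ℝ) < μ₀ := lt_of_le_of_lt (norm_nonneg L) hμ₀L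
  -- Step B : propagate positivity down to K
  set S : Set ℝ := {lam : ℝ | K ≤ lam ∧ ∀ μ : ℝ, lam ≤ μ → PosOp (R μ)} with hS
  have hSne : μ₀ ∈ S := ⟨hμ₀K, fun μ hμ => hA μ (lt_of_lt_of_le hμ₀L hμ)⟩
  have hSbdd : BddBelow S := ⟨K, fun x hx => hx.1⟩
  set c : ℝ := sInf S with hc
  have hKc : K ≤ c := le_csInf ⟨μ₀, hSne⟩ fun x hx => hx.1
  have hcPos' : ∀ μ : ℝ, c < μ → PosOp (R μ) := by
    intro μ hμ
    obtain ⟨lam, hlamS, hlam⟩ := exists_lt_of_csInf_lt ⟨μ₀, hSne⟩ hμ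
    exact hlamS.2 μ hlam.le
  have hgc : Continuous g := by
    rw [hg, hσA]
    simp only [Algebra.algebraMap_eq_smul_one]
    exact (continuous_id.smul continuous_const).sub continuous_const
  have hRcont : ContinuousAt R c := by
    have h2 := NormedRing.inverse_continuousAt (R := C(α, ℝ) →L[ℝ] C(α, ℝ)) (hU c hKc).unit
    rw [(hU c hKc).unit_spec] at h2
    exact ContinuousAt.comp (show ContinuousAt Ring.inverse (g c) from h2) hgc.continuousAt
  have hcS : PosOp (R c) := by
    have ht : Filter.Tendsto R (nhdsWithin c (Set.Ioi c)) (nhds (R c)) :=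
      hRcont.tendsto.mono_left nhdsWithin_le_nhds
    exact isClosed_posOp.mem_of_tendsto ht
      (eventually_mem_nhdsWithin.mono fun μ hμ => hcPos' μ hμ)
  have hcMem : c ∈ S :=
    ⟨hKc, fun μ hμ => hμ.lt_or_eq.elim (fun h => hcPos' μ h) (fun h => h ▸ hcS)⟩
  -- Step C : c = K
  have hcK : c = K := by
    by_contra hne
    have hlt : K < c := lt_of_le_of_ne hKc (Ne.symm hne)
    set d : ℝ := min ((c - K)/2) (1/(2*(‖R c‖+1))) with hd
    have hd0 : (0:ℝ) < d := lt_min (by linarith) (by positivity)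
    set lam : ℝ := c - d with hlamdef
    have hlamK : K ≤ lam := by
      have h1 : d ≤ (c - K)/2 := min_le_left _ _
      rw [hlamdef]; linarith
    have hlamc : lam < c := by rw [hlamdef]; linarith
    have hstep : ∀ μ : ℝ, lam ≤ μ → μ < c → PosOp (R μ) := by
      intro μ hμ1 hμ2
      set T : C(α, ℝ) →L[ℝ] C(α, ℝ) := (c - μ) • R c with hT
      have hTalt : T = σA (c - μ) * R c := by rw [hT, smul_eq_algebraMap_mul]
      have hTpos : PosOp T := by rw [hT]; exact hcS.smul (by linarith)
      have hTnorm : ‖T‖ < 1 := by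
        have h1 : ‖T‖ ≤ ‖c - μ‖ * ‖R c‖ := by
          rw [hT]; exact ContinuousLinearMap.opNorm_smul_le _ _
        rw [Real.norm_eq_abs, abs_of_nonneg (by linarith : (0:ℝ) ≤ c - μ)] at h1
        have h2 : c - μ ≤ d := by rw [hlamdef] at hμ1; linarith
        have h3 : d ≤ 1/(2*(‖R c‖+1)) := min_le_right _ _
        have h4 : (0:ℝ) ≤ ‖R c‖ := ContinuousLinearMap.opNorm_nonneg _
        have h5 : (c - μ) * ‖R c‖ ≤ (1/(2*(‖R c‖+1))) * ‖R c‖ :=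
          mul_le_mul_of_nonneg_right (le_trans h2 h3) h4
        have h6 : (1/(2*(‖R c‖+1))) * ‖R c‖ < 1 := by
          rw [div_mul_eq_mul_div, one_mul, div_lt_one (by positivity)]
          linarith
        linarith
      have hunit : IsUnit ((1:C(α, ℝ) →L[ℝ] C(α, ℝ)) - T) :=
        ⟨⟨1 - T, ∑' n : ℕ, T ^ n, mul_neg_geom_series T hTnorm, geom_series_mul_neg T hTnorm⟩, rfl⟩
      have hfact : g μ = g c * (1 - T) := by
        have e1 : g c * (1 - T) = g c - σA (c - μ) := by
          rw [mul_sub, mul_one, hTalt, ← mul_assoc, ← Algebra.commutes (c - μ) (g c),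
            mul_assoc, hR1 c hKc, mul_one]
        rw [e1, hg]
        simp only [map_sub]
        abel
      have h1 : g μ * (Ring.inverse (1 - T) * R c) = 1 := by
        rw [hfact, mul_assoc, ← mul_assoc (1 - T), Ring.mul_inverse_cancel _ hunit,
          one_mul, hR1 c hKc]
      have h2 : (Ring.inverse (1 - T) * R c) * g μ = 1 := by
        rw [hfact, mul_assoc, ← mul_assoc (R c), hR2 c hKc, one_mul,
          Ring.inverse_mul_cancel _ hunit]
      have hRμ : R μ = Ring.inverse (1 - T) * R c := ring_inverse_eq h1 h2
      rw [hRμ]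
      exact (posOp_inverse_one_sub hTpos hTnorm).mul hcS
    have hlamS : lam ∈ S := by
      refine ⟨hlamK, fun μ hμ => ?_⟩
      rcases lt_or_ge μ c with h | h
      · exact hstep μ hμ h
      · exact hcMem.2 μ h
    exact absurd (csInf_le hSbdd hlamS) (not_le.mpr hlamc)
  -- Step D : the iteration and contradiction
  have hRK : PosOp (R K) := hcK ▸ hcS
  have hRμ₀ : PosOp (R μ₀) := hcMem.2 μ₀ (hcK ▸ hμ₀K)
  set w : C(α, ℝ) := R K 1 with hwdef
  have hone : ∀ q : α, (0:ℝ) ≤ (1 : C(α, ℝ)) q := fun q => by simp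
  have hw : ∀ p, K * w p - (L w) p = 1 := by
    intro p
    have h1 := congrArg (fun T : C(α, ℝ) →L[ℝ] C(α, ℝ) => (T 1) p) (hR1 K le_rfl)
    simp only [hg, ContinuousLinearMap.mul_apply, ContinuousLinearMap.sub_apply,
      ContinuousMap.sub_apply, ContinuousLinearMap.one_apply, ContinuousMap.one_apply] at h1
    rw [algebraMap_apply_pt] at h1
    exact h1
  have hgdiff : g μ₀ - g K = σA (μ₀ - K) := by
    rw [hg]; simp only [map_sub]; abel
  have resid : R K - R μ₀ = R μ₀ * (σA (μ₀ - K) * R K) := by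
    calc R K - R μ₀
        = (R μ₀ * g μ₀) * R K - R μ₀ * (g K * R K) := by
          rw [hR2 μ₀ hμ₀K, one_mul, hR1 K le_rfl, mul_one]
      _ = R μ₀ * ((g μ₀ - g K) * R K) := by
          rw [mul_assoc, ← mul_sub, ← sub_mul]
      _ = R μ₀ * (σA (μ₀ - K) * R K) := by rw [hgdiff]
  have e2 : (1 : C(α, ℝ) →L[ℝ] C(α, ℝ)) - σA μ₀⁻¹ * g μ₀ = σA μ₀⁻¹ * L := by
    rw [hg]
    simp only [mul_sub, ← map_mul, inv_mul_cancel₀ hμ₀pos.ne', map_one]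
    abel
  have resid2 : R μ₀ - σA μ₀⁻¹ = R μ₀ * (σA μ₀⁻¹ * L) := by
    have e1 : R μ₀ * (σA μ₀⁻¹ * g μ₀) = σA μ₀⁻¹ := by
      rw [Algebra.commutes μ₀⁻¹ (g μ₀), ← mul_assoc, hR2 μ₀ hμ₀K, one_mul]
    calc R μ₀ - σA μ₀⁻¹
        = R μ₀ * (1 - σA μ₀⁻¹ * g μ₀) := by rw [mul_sub, mul_one, e1]
      _ = R μ₀ * (σA μ₀⁻¹ * L) := by rw [e2]
  have hwlb : ∀ p, μ₀⁻¹ ≤ w p := by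
    intro p
    have h1 : 0 ≤ ((R K - R μ₀) 1) p := by
      rw [resid]
      exact (hRμ₀.mul ((posOp_algebraMap (by linarith)).mul hRK)) 1 hone p
    have h2 : 0 ≤ ((R μ₀ - σA μ₀⁻¹) 1) p := by
      rw [resid2]
      exact (hRμ₀.mul ((posOp_algebraMap (le_of_lt (inv_pos.mpr hμ₀pos))).mul hposL)) 1 hone p
    simp only [ContinuousLinearMap.sub_apply, ContinuousMap.sub_apply] at h1 h2
    rw [algebraMap_apply_pt, ContinuousMap.one_apply, mul_one] at h2
    rw [← hwdef] at h1
    linarith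
  have hstep' : ∀ cst : ℝ, 0 ≤ cst → (∀ p, cst ≤ w p) → ∀ p, cst * K ≤ (L w) p := by
    intro cst hc0 hle p
    have hx : ∀ q, 0 ≤ (w - cst • (1 : C(α, ℝ))) q := by
      intro q
      simp only [ContinuousMap.sub_apply, ContinuousMap.smul_apply,
        ContinuousMap.one_apply, smul_eq_mul, mul_one]
      linarith [hle q]
    have h1 := hposL _ hx p
    rw [map_sub, map_smul] at h1
    simp only [ContinuousMap.sub_apply, ContinuousMap.smul_apply, smul_eq_mul] at h1
    have h2 := hL1 p
    nlinarith
  have hiter : ∀ n : ℕ, ∀ p, μ₀⁻¹ + n / K ≤ w p := by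
    intro n
    induction n with
    | zero => simpa using hwlb
    | succ n ih =>
      intro p
      have hcst : (0:ℝ) ≤ μ₀⁻¹ + n / K := by positivity
      have h1 := hstep' _ hcst ih p
      have h2 := hw p
      push_cast
      rw [← mul_le_mul_iff_right₀ hK]
      have e1 : K * (μ₀⁻¹ + ((n:ℝ) + 1) / K) = (μ₀⁻¹ + (n:ℝ)/K) * K + 1 := by
        field_simp
        ring
      rw [e1]
      linarith
  obtain ⟨n, hn⟩ := exists_nat_gt ((w (Classical.arbitrary α) - μ₀⁻¹) * K)
  have h1 := hiter n (Classical.arbitrary α)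
  have h2 : w (Classical.arbitrary α) - μ₀⁻¹ < (n:ℝ) / K := (lt_div_iff₀ hK).mpr hn
  linarith

end SpectrumLemma

end DelayAux

open DelayAux MeasureTheory

/-- For continuous, strictly positive, `2π`-periodic `r, ρ`, the integral
operator `(Lx)(t) = ∫_{t-r(t)}^t ρ(s)x(s) ds` on the Banach space of continuous
`2π`-periodic functions is a compact linear operator, and its spectral radius satisfies
`min_t ∫_{t-r(t)}^t ρ ≤ rad(L) ≤ max_t ∫_{t-r(t)}^t ρ`; in particular `rad(L) > 0`. -/
theorem delay_integral_operator_compact_spectral_radius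
    [Fact (0 < 2 * Real.pi)]
    (r ρ : ℝ → ℝ) (hr : Continuous r) (hρ : Continuous ρ)
    (hrpos : ∀ t, 0 < r t) (hρpos : ∀ t, 0 < ρ t)
    (hrper : ∀ t, r (t + 2 * Real.pi) = r t) (hρper : ∀ t, ρ (t + 2 * Real.pi) = ρ t)
    (L : C(AddCircle (2 * Real.pi), ℝ) →L[ℝ] C(AddCircle (2 * Real.pi), ℝ))
    (hL : ∀ (x : C(AddCircle (2 * Real.pi), ℝ)) (t : ℝ),
      (L x) (t : AddCircle (2 * Real.pi)) =
        ∫ s in (t - r t)..t, ρ s * x (s : AddCircle (2 * Real.pi))) :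
    IsCompactOperator (⇑L) ∧
      ENNReal.ofReal (sInf (Set.range fun t : ℝ => ∫ s in (t - r t)..t, ρ s)) ≤
        spectralRadius ℝ L ∧
      spectralRadius ℝ L ≤
        ENNReal.ofReal (sSup (Set.range fun t : ℝ => ∫ s in (t - r t)..t, ρ s)) ∧
      0 < spectralRadius ℝ L := by
  have hπ : (0:ℝ) < 2 * Real.pi := by positivity
  haveI : Nonempty (AddCircle (2 * Real.pi)) := ⟨((0:ℝ) : AddCircle (2 * Real.pi))⟩
  haveI : Nontrivial C(AddCircle (2 * Real.pi), ℝ) := ⟨1, 0, by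
    intro h
    have := ContinuousMap.congr_fun h (Classical.arbitrary _)
    simp at this⟩
  set f : ℝ → ℝ := fun t => ∫ s in (t - r t)..t, ρ s with hfdef
  have hρint : ∀ a b : ℝ, IntervalIntegrable ρ volume a b :=
    fun a b => hρ.intervalIntegrable a b
  have hfper : Function.Periodic f (2 * Real.pi) := by
    intro t
    show (∫ s in (t + 2*Real.pi - r (t + 2*Real.pi))..(t + 2*Real.pi), ρ s) = _
    rw [hrper, show t + 2*Real.pi - r t = (t - r t) + 2*Real.pi by ring,
      ← intervalIntegral.integral_comp_add_right (fun s => ρ s) (2*Real.pi)]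
    simp only [hρper]
    rfl
  have hfcont : Continuous f := by
    have h0 : ∀ t, f t = (∫ s in (0:ℝ)..t, ρ s) - ∫ s in (0:ℝ)..(t - r t), ρ s := by
      intro t
      have h := intervalIntegral.integral_add_adjacent_intervals
        (hρint 0 (t - r t)) (hρint (t - r t) t)
      show (∫ s in (t - r t)..t, ρ s) = _
      linarith
    have hprim : Continuous fun u : ℝ => ∫ s in (0:ℝ)..u, ρ s :=
      intervalIntegral.continuous_primitive hρint 0
    rw [funext h0]
    exact hprim.sub (hprim.comp (continuous_id.sub hr))
  have hfpos : ∀ t, 0 < f t := fun t =>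
    intervalIntegral.intervalIntegral_pos_of_pos (hρint _ _) hρpos (by linarith [hrpos t])
  have hrange : Set.range f = f '' Set.uIcc 0 (0 + 2*Real.pi) :=
    (hfper.image_uIcc (ne_of_gt hπ) 0).symm
  have hcpt : IsCompact (Set.range f) := by
    rw [hrange]; exact isCompact_uIcc.image hfcont
  have hne : (Set.range f).Nonempty := ⟨f 0, 0, rfl⟩
  set K := sInf (Set.range f) with hKdef
  set M := sSup (Set.range f) with hMdef
  have hKmem : K ∈ Set.range f := hcpt.sInf_mem hne
  have hK0 : 0 < K := by
    obtain ⟨t0, ht0⟩ := hKmem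
    rw [← ht0]; exact hfpos t0
  have hKle : ∀ t, K ≤ f t := fun t => csInf_le hcpt.bddBelow ⟨t, rfl⟩
  have hleM : ∀ t, f t ≤ M := fun t => le_csSup hcpt.bddAbove ⟨t, rfl⟩
  have hM0 : 0 < M := lt_of_lt_of_le (hfpos 0) (hleM 0)
  have hsurj : ∀ p : AddCircle (2*Real.pi), ∃ t : ℝ, (t : AddCircle (2*Real.pi)) = p :=
    fun p => Quotient.exists_rep p
  have hgx : ∀ x : C(AddCircle (2*Real.pi), ℝ),
      Continuous fun s : ℝ => ρ s * x (s : AddCircle (2*Real.pi)) :=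
    fun x => hρ.mul (x.continuous.comp (AddCircle.continuous_mk' _))
  -- pointwise bound
  have hLb : ∀ (x : C(AddCircle (2*Real.pi), ℝ)) (t : ℝ),
      |(L x) (t : AddCircle (2*Real.pi))| ≤ f t * ‖x‖ := by
    intro x t
    rw [hL]
    have hab : t - r t ≤ t := by linarith [hrpos t]
    calc |∫ s in (t - r t)..t, ρ s * x (s : AddCircle (2*Real.pi))|
        ≤ ∫ s in (t - r t)..t, |ρ s * x (s : AddCircle (2*Real.pi))| :=
          intervalIntegral.abs_integral_le_integral_abs hab
      _ ≤ ∫ s in (t - r t)..t, ρ s * ‖x‖ := by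
          apply intervalIntegral.integral_mono_on hab
            ((hgx x).abs.intervalIntegrable _ _)
            ((hρ.mul continuous_const).intervalIntegrable _ _)
          intro s _
          rw [abs_mul, abs_of_pos (hρpos s)]
          refine mul_le_mul_of_nonneg_left ?_ (hρpos s).le
          have := x.norm_coe_le_norm ((s : AddCircle (2*Real.pi)))
          rwa [Real.norm_eq_abs] at this
      _ = f t * ‖x‖ := by rw [intervalIntegral.integral_mul_const]
  have hnormL : ‖L‖ ≤ M := by
    refine ContinuousLinearMap.opNorm_le_bound _ hM0.le fun x => ?_
    rw [ContinuousMap.norm_le _ (mul_nonneg hM0.le (norm_nonneg x))]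
    intro p
    obtain ⟨t, rfl⟩ := hsurj p
    rw [Real.norm_eq_abs]
    exact le_trans (hLb x t) (mul_le_mul_of_nonneg_right (hleM t) (norm_nonneg x))
  -- positivity of L
  have hposL : DelayAux.PosOp L := by
    intro x hx p
    obtain ⟨t, rfl⟩ := hsurj p
    rw [hL]
    apply intervalIntegral.integral_nonneg (by linarith [hrpos t])
    intro s _
    exact mul_nonneg (hρpos s).le (hx _)
  have hL1 : ∀ p, K ≤ (L 1) p := by
    intro p
    obtain ⟨t, rfl⟩ := hsurj p
    rw [hL]
    simp only [ContinuousMap.one_apply, mul_one]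
    exact hKle t
  -- spectral bounds
  obtain ⟨k, hk, hKk⟩ := DelayAux.exists_mem_spectrum_of_posOp L hposL hK0 hL1
  have hlow : ENNReal.ofReal K ≤ spectralRadius ℝ L := by
    have h1 : ENNReal.ofReal K ≤ (‖k‖₊ : ENNReal) := by
      rw [← ENNReal.ofReal_coe_nnreal, coe_nnnorm]
      apply ENNReal.ofReal_le_ofReal
      rw [Real.norm_eq_abs]
      exact le_trans hKk (le_abs_self k)
    refine le_trans h1 ?_
    exact le_iSup₂ (f := fun k (_ : k ∈ spectrum ℝ L) => (‖k‖₊ : ENNReal)) k hk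
  have hup : spectralRadius ℝ L ≤ ENNReal.ofReal M := by
    refine le_trans (spectrum.spectralRadius_le_nnnorm (𝕜 := ℝ) (a := L)) ?_
    rw [← ENNReal.ofReal_coe_nnreal, coe_nnnorm]
    exact ENNReal.ofReal_le_ofReal hnormL
  -- compactness via Arzelà–Ascoli
  have hρper' : Function.Periodic ρ (2*Real.pi) := hρper
  have hρrange : IsCompact (Set.range ρ) := by
    rw [← hρper'.image_uIcc (ne_of_gt hπ) 0]
    exact isCompact_uIcc.image hρ
  set Cρ := sSup (Set.range ρ) with hCρdef
  have hρle : ∀ s, ρ s ≤ Cρ := fun s => le_csSup hρrange.bddAbove ⟨s, rfl⟩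
  have hCρ0 : 0 ≤ Cρ := le_trans (hρpos 0).le (hρle 0)
  have hdiff : ∀ (x : C(AddCircle (2*Real.pi), ℝ)), ‖x‖ ≤ 1 → ∀ t t₀ : ℝ,
      |(L x) (t : AddCircle (2*Real.pi)) - (L x) (t₀ : AddCircle (2*Real.pi))|
        ≤ Cρ * |t - t₀| + Cρ * |(t - r t) - (t₀ - r t₀)| := by
    intro x hx t t₀
    rw [hL x t, hL x t₀]
    have hbound : ∀ s : ℝ, ‖ρ s * x (s : AddCircle (2*Real.pi))‖ ≤ Cρ := by
      intro s
      rw [Real.norm_eq_abs, abs_mul, abs_of_pos (hρpos s)]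
      have h1 : |x ((s : ℝ) : AddCircle (2*Real.pi))| ≤ 1 := by
        have := x.norm_coe_le_norm ((s : ℝ) : AddCircle (2*Real.pi))
        rw [Real.norm_eq_abs] at this
        linarith
      calc ρ s * |x ((s : ℝ) : AddCircle (2*Real.pi))| ≤ Cρ * 1 :=
            mul_le_mul (hρle s) h1 (abs_nonneg _) hCρ0
        _ = Cρ := mul_one _
    have hI : ∀ a b : ℝ, IntervalIntegrable
        (fun s : ℝ => ρ s * x (s : AddCircle (2*Real.pi))) volume a b :=
      fun a b => (hgx x).intervalIntegrable a b
    have e1 := intervalIntegral.integral_add_adjacent_intervals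
      (hI (t - r t) (t₀ - r t₀)) (hI (t₀ - r t₀) t₀)
    have e2 := intervalIntegral.integral_add_adjacent_intervals
      (hI (t - r t) t₀) (hI t₀ t)
    have b1 : |∫ s in t₀..t, ρ s * x (s : AddCircle (2*Real.pi))| ≤ Cρ * |t - t₀| := by
      have := intervalIntegral.norm_integral_le_of_norm_le_const
        (C := Cρ) (a := t₀) (b := t)
        (f := fun s : ℝ => ρ s * x (s : AddCircle (2*Real.pi))) (fun s _ => hbound s)
      rwa [Real.norm_eq_abs] at this
    have b2 : |∫ s in (t - r t)..(t₀ - r t₀), ρ s * x (s : AddCircle (2*Real.pi))|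
        ≤ Cρ * |(t₀ - r t₀) - (t - r t)| := by
      have := intervalIntegral.norm_integral_le_of_norm_le_const
        (C := Cρ) (a := t - r t) (b := t₀ - r t₀)
        (f := fun s : ℝ => ρ s * x (s : AddCircle (2*Real.pi))) (fun s _ => hbound s)
      rwa [Real.norm_eq_abs] at this
    have hsplit : (∫ s in (t - r t)..t, ρ s * x (s : AddCircle (2*Real.pi)))
        - (∫ s in (t₀ - r t₀)..t₀, ρ s * x (s : AddCircle (2*Real.pi)))
        = (∫ s in (t - r t)..(t₀ - r t₀), ρ s * x (s : AddCircle (2*Real.pi)))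
          + ∫ s in t₀..t, ρ s * x (s : AddCircle (2*Real.pi)) := by
      linarith
    rw [hsplit]
    have habs := abs_add_le
      (∫ s in (t - r t)..(t₀ - r t₀), ρ s * x (s : AddCircle (2*Real.pi)))
      (∫ s in t₀..t, ρ s * x (s : AddCircle (2*Real.pi)))
    rw [abs_sub_comm (t₀ - r t₀) (t - r t)] at b2
    linarith
  set e := ContinuousMap.isometryEquivBoundedOfCompact (AddCircle (2*Real.pi)) ℝ with hedef
  set B1 : Set C(AddCircle (2*Real.pi), ℝ) := Metric.closedBall 0 1 with hB1def
  set Aset : Set (BoundedContinuousFunction (AddCircle (2*Real.pi)) ℝ) :=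
    e '' (⇑L '' B1) with hAsetdef
  have hmemnorm : ∀ F ∈ Aset, ∃ x : C(AddCircle (2*Real.pi), ℝ),
      ‖x‖ ≤ 1 ∧ ∀ p, F p = (L x) p := by
    intro F hF
    obtain ⟨y, ⟨x, hxB, rfl⟩, rfl⟩ := hF
    exact ⟨x, mem_closedBall_zero_iff.mp hxB, fun p => rfl⟩
  have hequi : Equicontinuous ((↑) : Aset → AddCircle (2*Real.pi) → ℝ) := by
    intro p
    rw [Metric.equicontinuousAt_iff_right]
    intro ε hε
    obtain ⟨t₀, rfl⟩ := hsurj p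
    set ε' := ε / (4 * (Cρ + 1)) with hε'def
    have hε'0 : 0 < ε' := by positivity
    obtain ⟨δ₁, hδ₁0, hδ₁⟩ := Metric.continuousAt_iff.mp
      ((continuous_id.sub hr).continuousAt (x := t₀)) ε' hε'0
    set δ := min δ₁ ε' with hδdef
    have hδ0 : 0 < δ := lt_min hδ₁0 hε'0
    have hUnb : ((↑) '' Metric.ball t₀ δ : Set (AddCircle (2*Real.pi)))
        ∈ nhds ((t₀ : ℝ) : AddCircle (2*Real.pi)) :=
      QuotientAddGroup.isOpenMap_coe.image_mem_nhds (Metric.ball_mem_nhds _ hδ0)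
    filter_upwards [hUnb] with q hq i
    obtain ⟨t, htball, rfl⟩ := hq
    obtain ⟨x, hx1, hxF⟩ := hmemnorm i i.2
    have hd1 : |t - t₀| < δ := by
      rw [← Real.dist_eq]; exact Metric.mem_ball.mp htball
    have hd2 : |(t - r t) - (t₀ - r t₀)| < ε' := by
      have := hδ₁ (show dist t t₀ < δ₁ from lt_of_lt_of_le
        (Metric.mem_ball.mp htball) (min_le_left _ _))
      rwa [Real.dist_eq] at this
    have hest := hdiff x hx1 t₀ t
    have hcomm : |t₀ - t| = |t - t₀| := abs_sub_comm _ _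
    have hcomm2 : |(t₀ - r t₀) - (t - r t)| = |(t - r t) - (t₀ - r t₀)| := abs_sub_comm _ _
    rw [Real.dist_eq]
    show |(i : BoundedContinuousFunction (AddCircle (2*Real.pi)) ℝ) ((t₀:ℝ) : AddCircle (2*Real.pi))
      - (i : BoundedContinuousFunction (AddCircle (2*Real.pi)) ℝ) ((t:ℝ) : AddCircle (2*Real.pi))| < ε
    rw [hxF, hxF]
    have hfrac : (Cρ + 1) * ε' = ε / 4 := by
      rw [hε'def]; field_simp
    have hδε' : δ ≤ ε' := min_le_right _ _
    calc |(L x) ((t₀:ℝ) : AddCircle (2*Real.pi)) - (L x) ((t:ℝ) : AddCircle (2*Real.pi))|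
        ≤ Cρ * |t₀ - t| + Cρ * |(t₀ - r t₀) - (t - r t)| := hest
      _ < ε := by
          rw [hcomm, hcomm2]
          nlinarith [hd1, hd2, hCρ0, hε'0, mul_le_mul_of_nonneg_left hδε' hCρ0]
  have hins : ∀ (F : BoundedContinuousFunction (AddCircle (2*Real.pi)) ℝ)
      (p : AddCircle (2*Real.pi)), F ∈ Aset → F p ∈ Metric.closedBall (0:ℝ) M := by
    intro F p hF
    obtain ⟨x, hx1, hxF⟩ := hmemnorm F hF
    rw [Metric.mem_closedBall, Real.dist_eq, sub_zero, hxF]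
    calc |(L x) p| = ‖(L x) p‖ := (Real.norm_eq_abs _).symm
      _ ≤ ‖L x‖ := (L x).norm_coe_le_norm p
      _ ≤ ‖L‖ * ‖x‖ := L.le_opNorm x
      _ ≤ M * 1 := mul_le_mul hnormL hx1 (norm_nonneg x) hM0.le
      _ = M := mul_one M
  have hAcpt : IsCompact (closure Aset) :=
    BoundedContinuousFunction.arzela_ascoli (Metric.closedBall (0:ℝ) M)
      (isCompact_closedBall _ _) Aset hins hequi
  have hAset2 : Aset = ⇑e.toHomeomorph '' (⇑L '' B1) := rfl
  have himg : closure (⇑L '' B1) = ⇑e.toHomeomorph.symm '' closure Aset := by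
    rw [hAset2, ← Homeomorph.image_closure, Set.image_image]
    simp
  have hclos : IsCompact (closure (⇑L '' B1)) := by
    rw [himg]
    exact hAcpt.image e.toHomeomorph.symm.continuous
  have hcompact : IsCompactOperator (⇑L) := by
    have h := (isCompactOperator_iff_isCompact_closure_image_closedBall
      (L : C(AddCircle (2*Real.pi), ℝ) →ₗ[ℝ] C(AddCircle (2*Real.pi), ℝ)) one_pos).mpr
      (by simpa using hclos)
    simpa using h
  exact ⟨hcompact, hlow, hup, lt_of_lt_of_le (ENNReal.ofReal_pos.mpr hK0) hlow⟩
end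

section
/- Let λ > 3 and let n, m be integers with 3 < λ < 2πm + 1 and √((λ−1)² − 4) < 2πn < λ − 1. Define η(t) = t + (λ−1)sin t − 2πn and t₀₀ = π/2 + arccos(2πn/(λ−1)). Then η(t₀₀) = t₀₀ and |η'(t₀₀)| < 1. -/
open Real

/-- For `3 < λ < 2πm + 1` and an integer `n` with
`√((λ−1)² − 4) < 2πn < λ − 1`, the map `η(t) = t + (λ−1)sin t − 2πn` has a contractive
fixed point at `t₀₀ = π/2 + arccos(2πn/(λ−1))`: `η(t₀₀) = t₀₀` and `|η'(t₀₀)| < 1`. -/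
theorem contractive_fixed_point_exists
    (lam : ℝ) (n m : ℕ)
    (hlam₁ : 3 < lam) (hlam₂ : lam < 2 * Real.pi * m + 1)
    (hn₁ : Real.sqrt ((lam - 1) ^ 2 - 4) < 2 * Real.pi * n)
    (hn₂ : 2 * Real.pi * n < lam - 1)
    (η : ℝ → ℝ) (hη : ∀ t, η t = t + (lam - 1) * Real.sin t - 2 * Real.pi * n)
    (t₀₀ : ℝ) (ht₀₀ : t₀₀ = Real.pi / 2 + Real.arccos (2 * Real.pi * n / (lam - 1))) :
    η t₀₀ = t₀₀ ∧ |deriv η t₀₀| < 1 := by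
  have hlam' : (0:ℝ) < lam - 1 := by linarith
  obtain ⟨x, hxdef⟩ : ∃ x : ℝ, x = 2 * Real.pi * n / (lam - 1) := ⟨_, rfl⟩
  rw [← hxdef] at ht₀₀
  have hsq : 0 ≤ (lam - 1) ^ 2 - 4 := by nlinarith
  have hn0 : (0:ℝ) ≤ 2 * Real.pi * n := le_of_lt (lt_of_le_of_lt (Real.sqrt_nonneg _) hn₁)
  have hn0' : (0:ℝ) < 2 * Real.pi * n := lt_of_le_of_lt (Real.sqrt_nonneg _) hn₁
  have hx0 : 0 ≤ x := by rw [hxdef]; exact div_nonneg hn0 hlam'.le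
  have hx1 : x < 1 := by rw [hxdef]; exact (div_lt_one hlam').mpr hn₂
  have hxn : (lam - 1) * x = 2 * Real.pi * n := by
    rw [hxdef]; field_simp
  -- sin t₀₀ = x, cos t₀₀ = -sqrt (1 - x^2)
  have hsin : Real.sin t₀₀ = x := by
    rw [ht₀₀, Real.sin_add, Real.sin_pi_div_two, Real.cos_pi_div_two,
      Real.cos_arccos (by linarith) (by linarith)]
    ring
  have hcos : Real.cos t₀₀ = -Real.sqrt (1 - x ^ 2) := by
    rw [ht₀₀, Real.cos_add, Real.sin_pi_div_two, Real.cos_pi_div_two, Real.sin_arccos]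
    ring
  constructor
  · rw [hη, hsin]
    nlinarith [hxn]
  · have hd : deriv η t₀₀ = 1 + (lam - 1) * Real.cos t₀₀ := by
      have hfun : η = fun t => t + (lam - 1) * Real.sin t - 2 * Real.pi * n := funext hη
      rw [hfun]
      have h : HasDerivAt (fun t : ℝ => t + (lam - 1) * Real.sin t - 2 * Real.pi * n)
          (1 + (lam - 1) * Real.cos t₀₀) t₀₀ := by
        simpa using ((hasDerivAt_id t₀₀).add
          ((Real.hasDerivAt_sin t₀₀).const_mul (lam - 1))).sub_const (2 * Real.pi * n)
      exact h.deriv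
    obtain ⟨s, hsdef⟩ : ∃ s : ℝ, s = (lam - 1) * Real.sqrt (1 - x ^ 2) := ⟨_, rfl⟩
    have hspos : 0 < s := by
      rw [hsdef]; exact mul_pos hlam' (Real.sqrt_pos.mpr (by nlinarith))
    have hs2 : s < 2 := by
      have hsq2 : s ^ 2 = (lam - 1) ^ 2 - (2 * Real.pi * n) ^ 2 := by
        have h1 : Real.sqrt (1 - x ^ 2) ^ 2 = 1 - x ^ 2 :=
          Real.sq_sqrt (by nlinarith)
        have : s ^ 2 = (lam - 1) ^ 2 * (1 - x ^ 2) := by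
          rw [hsdef, mul_pow, h1]
        rw [this]
        nlinarith [hxn]
      have hlt : (lam - 1) ^ 2 - 4 < (2 * Real.pi * n) ^ 2 :=
        (Real.sqrt_lt' hn0').mp hn₁
      nlinarith
    have hrw : 1 + (lam - 1) * -Real.sqrt (1 - x ^ 2) = 1 - s := by
      rw [hsdef]; ring
    rw [hd, hcos, hrw, abs_lt]
    constructor <;> linarith
end

section
/- Let K > 0 and λ > 2 be real, and define H₀(λ) = 1/λ and Hₙ(λ) = (2/λ)ⁿK for n ≥ 1. Suppose a real sequence (wₙ) satisfies |w_{n+1} − wₙ| ≤ Hₙ(λ)·max_{0≤k≤n}|wₖ| for all n ≥ 0. Then |wₙ| ≤ (∏_{k=0}^{∞}(1 + Hₖ(λ)))·|w₀| for every n, the limit w∞ = lim wₙ exists, and |w∞ − w₀| ≤ Ω(λ)|w₀| where Ω(λ) = (Σ_{n=0}^∞ Hₙ(λ))·(∏_{k=0}^∞(1 + Hₖ(λ))). In particular, if Ω(λ) < 1 and w₀ ≠ 0 then w∞ ≠ 0. -/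
open Filter

set_option maxHeartbeats 1000000 in
/-- With `H₀ = 1/λ`, `Hₙ = (2/λ)ⁿK` for `n ≥ 1`, `λ > 2`, `K > 0`, if
`|w_{n+1} − wₙ| ≤ Hₙ · max_{0≤k≤n}|wₖ|`, then `|wₙ| ≤ (∏_{k=0}^∞(1+Hₖ))|w₀|`, the limit
`w∞` exists, and `|w∞ − w₀| ≤ Ω|w₀|` with `Ω = (Σ Hₙ)(∏(1+Hₖ))`; in particular if
`Ω < 1` and `w₀ ≠ 0` then `w∞ ≠ 0`. -/
theorem w_infinity_estimate
    (K lam : ℝ) (hK : 0 < K) (hlam : 2 < lam)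
    (H : ℕ → ℝ) (hH0 : H 0 = 1 / lam) (hHn : ∀ n : ℕ, 1 ≤ n → H n = (2 / lam) ^ n * K)
    (w : ℕ → ℝ)
    (hw : ∀ n : ℕ, |w (n + 1) - w n| ≤
      H n * (Finset.range (n + 1)).sup' (by simp) (fun k => |w k|)) :
    (∀ n : ℕ, |w n| ≤ (∏' k : ℕ, (1 + H k)) * |w 0|) ∧
      ∃ winf : ℝ, Tendsto w atTop (nhds winf) ∧
        |winf - w 0| ≤ ((∑' n : ℕ, H n) * ∏' k : ℕ, (1 + H k)) * |w 0| ∧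
        (((∑' n : ℕ, H n) * ∏' k : ℕ, (1 + H k)) < 1 → w 0 ≠ 0 → winf ≠ 0) := by
  have hlam0 : (0:ℝ) < lam := by linarith
  have hr0 : (0:ℝ) < 2 / lam := by positivity
  have hr1 : 2 / lam < 1 := by rw [div_lt_one hlam0]; linarith
  have hHpos : ∀ n, 0 ≤ H n := by
    intro n
    rcases Nat.eq_zero_or_pos n with h | h
    · rw [h, hH0]; positivity
    · rw [hHn n h]; positivity
  have hHsum : Summable H := by
    rw [← summable_nat_add_iff 1]
    have h1 : Summable (fun n : ℕ => (2 / lam) ^ (n + 1) * K) := by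
      have := ((summable_geometric_of_lt_one hr0.le hr1).mul_right K).mul_left (2 / lam)
      exact this.congr (fun n => by ring)
    exact h1.congr (fun n => (hHn (n + 1) (by omega)).symm)
  have h1H : ∀ n, (1:ℝ) ≤ 1 + H n := fun n => by linarith [hHpos n]
  have h0H : ∀ n, (0:ℝ) < 1 + H n := fun n => by linarith [hHpos n]
  have hlog : Summable (fun n => Real.log (1 + H n)) := by
    refine Summable.of_nonneg_of_le (fun n => Real.log_nonneg (h1H n)) (fun n => ?_) hHsum
    calc Real.log (1 + H n) ≤ (1 + H n) - 1 := Real.log_le_sub_one_of_pos (h0H n)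
      _ = H n := by ring
  have hmul : Multipliable (fun k => 1 + H k) :=
    Real.multipliable_of_summable_log h0H hlog
  set C : ℝ := ∏' k : ℕ, (1 + H k) with hC
  set P : ℕ → ℝ := fun n => ∏ k ∈ Finset.range n, (1 + H k) with hP
  have hPpos : ∀ n, 0 < P n := fun n => Finset.prod_pos (fun i _ => h0H i)
  have hPmono : Monotone P := by
    apply monotone_nat_of_le_succ
    intro n
    have : P (n + 1) = P n * (1 + H n) := Finset.prod_range_succ _ n
    nlinarith [hPpos n, hHpos n]
  have hPC : ∀ n, P n ≤ C :=
    fun n => hPmono.ge_of_tendsto (HasProd.tendsto_prod_nat hmul.hasProd) n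
  set M : ℕ → ℝ := fun n => (Finset.range (n + 1)).sup' (by simp) (fun k => |w k|) with hM
  have hMw : ∀ n k, k ≤ n → |w k| ≤ M n := by
    intro n k hk
    exact Finset.le_sup' (fun k => |w k|) (Finset.mem_range.2 (by omega))
  have hMP : ∀ n, M n ≤ P n * |w 0| := by
    intro n
    induction n with
    | zero => simp [hM, hP]
    | succ n ih =>
      have hMn0 : 0 ≤ M n := le_trans (abs_nonneg _) (hMw n 0 (by omega))
      rw [hM]
      refine Finset.sup'_le _ _ (fun k hk => ?_)
      have hk' : k ≤ n + 1 := by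
        have := Finset.mem_range.1 hk; omega
      have hPn1 : P (n + 1) = (1 + H n) * P n := by
        simp only [hP]; rw [Finset.prod_range_succ]; ring
      rcases Nat.lt_or_ge k (n + 1) with h | h
      · calc |w k| ≤ M n := hMw n k (by omega)
          _ ≤ P n * |w 0| := ih
          _ ≤ P (n + 1) * |w 0| := by
            rw [hPn1]
            nlinarith [hPpos n, abs_nonneg (w 0), hHpos n]
      · have hkeq : k = n + 1 := by omega
        subst hkeq
        calc |w (n + 1)| ≤ |w (n + 1) - w n| + |w n| := by
              have := abs_sub_abs_le_abs_sub (w (n + 1)) (w n); linarith [abs_sub_comm (w (n+1)) (w n)]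
          _ ≤ H n * M n + M n := by
              have h1 := hw n
              have h2 := hMw n n le_rfl
              linarith
          _ = (1 + H n) * M n := by ring
          _ ≤ (1 + H n) * (P n * |w 0|) := by
              nlinarith [h0H n, hHpos n]
          _ = P (n + 1) * |w 0| := by rw [hPn1]; ring
  have hwC : ∀ n : ℕ, |w n| ≤ C * |w 0| := by
    intro n
    calc |w n| ≤ M n := hMw n n le_rfl
      _ ≤ P n * |w 0| := hMP n
      _ ≤ C * |w 0| := mul_le_mul_of_nonneg_right (hPC n) (abs_nonneg _)
  refine ⟨hwC, ?_⟩
  set d : ℕ → ℝ := fun n => H n * (C * |w 0|) with hd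
  have hdsum : Summable d := hHsum.mul_right _
  have hdist : ∀ n, dist (w n) (w (n + 1)) ≤ d n := by
    intro n
    rw [dist_comm, Real.dist_eq]
    calc |w (n + 1) - w n| ≤ H n * M n := hw n
      _ ≤ H n * (C * |w 0|) := by
          have : M n ≤ C * |w 0| :=
            le_trans (hMP n) (mul_le_mul_of_nonneg_right (hPC n) (abs_nonneg _))
          exact mul_le_mul_of_nonneg_left this (hHpos n)
  have hcauchy : CauchySeq w := cauchySeq_of_dist_le_of_summable d hdist hdsum
  obtain ⟨winf, hwinf⟩ := cauchySeq_tendsto_of_complete hcauchy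
  refine ⟨winf, hwinf, ?_, ?_⟩
  · have h := dist_le_tsum_of_dist_le_of_tendsto₀ d hdist hdsum hwinf
    have htd : ∑' n, d n = (∑' n, H n) * (C * |w 0|) := tsum_mul_right
    rw [dist_comm, Real.dist_eq] at h
    calc |winf - w 0| ≤ ∑' n, d n := h
      _ = (∑' n, H n) * C * |w 0| := by rw [htd]; ring
  · intro hΩ hw0 hzero
    subst hzero
    have h := dist_le_tsum_of_dist_le_of_tendsto₀ d hdist hdsum hwinf
    have htd : ∑' n, d n = (∑' n, H n) * C * |w 0| := by
      rw [hd, tsum_mul_right]; ring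
    rw [Real.dist_eq, htd] at h
    have habs : 0 < |w 0| := abs_pos.2 hw0
    have : |w 0 - 0| = |w 0| := by simp
    rw [this] at h
    nlinarith
end
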